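/- Let ℓ > 0 and L > 0. For w₀ < ℓ write γ₁★(w₀) for a number γ such that the solution with parameters (w₀,γ) satisfies ∫₀^∞ max(w(x) − ℓ, 0) dx = L. Then γ₁★(w₀) is unique: if two values γ, γ̃ both have this property for the same w₀ < ℓ, then γ = γ̃. Moreover γ₁★ is strictly decreasing: if w₀† < w₀‡ < ℓ, then γ₁★(w₀‡) < γ₁★(w₀†). -/

import Mathlib

open Set MeasureTheory Filter Topology

/-- `piU U c w = min_{μ ∈ U} (μ·w + c(μ))`, realized as an infimum. -/
noncomputable def piU (U : Set ℝ) (c : ℝ → ℝ) (w : ℝ) : ℝ :=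
  sInf ((fun μ => μ * w + c μ) '' U)

-- Lipschitz-type bound
lemma piU_lip (U : Set ℝ) (hUne : U.Nonempty) (hUcpt : IsCompact U)
    (c : ℝ → ℝ) (hc : Continuous c) :
    ∃ M : ℝ, 0 ≤ M ∧ ∀ a b : ℝ, piU U c a - piU U c b ≤ M * |a - b| := by
  obtain ⟨M, hM⟩ := hUcpt.isBounded.subset_closedBall 0
  refine ⟨max M 0, le_max_right _ _, fun a b => ?_⟩
  have hcont : ∀ t : ℝ, Continuous fun μ : ℝ => μ * t + c μ := by
    intro t; continuity
  obtain ⟨μ₀, hμ₀U, hmin⟩ := hUcpt.exists_isMinOn hUne (hcont b).continuousOn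
  have hb : piU U c b = μ₀ * b + c μ₀ := by
    refine IsLeast.csInf_eq ⟨mem_image_of_mem _ hμ₀U, ?_⟩
    rintro _ ⟨μ, hμ, rfl⟩; exact hmin hμ
  have ha : piU U c a ≤ μ₀ * a + c μ₀ := by
    refine csInf_le ?_ (mem_image_of_mem _ hμ₀U)
    exact (hUcpt.image (hcont a)).bddBelow
  have hμ₀ : |μ₀| ≤ max M 0 := by
    have := hM hμ₀U
    simp only [Metric.mem_closedBall, Real.dist_eq, sub_zero] at this
    exact this.trans (le_max_left _ _)
  calc piU U c a - piU U c b ≤ (μ₀ * a + c μ₀) - (μ₀ * b + c μ₀) := by linarith [ha, hb]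
    _ = μ₀ * (a - b) := by ring
    _ ≤ |μ₀ * (a - b)| := le_abs_self _
    _ = |μ₀| * |a - b| := abs_mul _ _
    _ ≤ max M 0 * |a - b| := by
        exact mul_le_mul_of_nonneg_right hμ₀ (abs_nonneg _)

-- propagation of positivity
lemma prop_pos {d d' : ℝ → ℝ} {K : ℝ} (hK : 0 ≤ K)
    (hd : ∀ x ∈ Ici (0:ℝ), HasDerivWithinAt d (d' x) (Ici 0) x)
    (hineq : ∀ x ∈ Ici (0:ℝ), 0 ≤ d x → -(K * d x) ≤ d' x)
    {x₀ x : ℝ} (hx₀ : 0 ≤ x₀) (hx : x₀ ≤ x) (hpos : 0 < d x₀) : 0 < d x := by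
  by_contra hcon
  push_neg at hcon
  have hdcont : ContinuousOn d (Ici 0) := fun y hy => (hd y hy).continuousWithinAt
  set S : Set ℝ := {y ∈ Icc x₀ x | d y ≤ 0} with hS
  have hSIcc : S ⊆ Icc x₀ x := fun y hy => hy.1
  have hne : S.Nonempty := ⟨x, ⟨hx, le_refl x⟩, hcon⟩
  have hbdd : BddBelow S := ⟨x₀, fun y hy => hy.1.1⟩
  have hIccIci : Icc x₀ x ⊆ Ici (0:ℝ) := fun y hy => le_trans hx₀ hy.1
  have hclosed : IsClosed S := by
    have : S = Icc x₀ x ∩ d ⁻¹' (Iic 0) := by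
      ext y; simp [hS, Set.mem_sep_iff, and_comm]
    rw [this]
    exact (hdcont.mono hIccIci).preimage_isClosed_of_isClosed isClosed_Icc isClosed_Iic
  set x₂ := sInf S with hx₂
  have hx₂S : x₂ ∈ S := hclosed.csInf_mem hne hbdd
  have hx₂Icc : x₂ ∈ Icc x₀ x := hSIcc hx₂S
  have hdx₂ : d x₂ ≤ 0 := hx₂S.2
  have hdpos : ∀ y ∈ Ico x₀ x₂, 0 < d y := by
    intro y hy
    by_contra hcy
    push_neg at hcy
    have : y ∈ S := ⟨⟨hy.1, hy.2.le.trans hx₂Icc.2⟩, hcy⟩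
    exact absurd (csInf_le hbdd this) (not_le.mpr hy.2)
  set g : ℝ → ℝ := fun y => d y * Real.exp (K * y) with hg
  have hmono : MonotoneOn g (Icc x₀ x₂) := by
    refine monotoneOn_of_hasDerivWithinAt_nonneg (convex_Icc _ _)
      (f' := fun y => (d' y + K * d y) * Real.exp (K * y)) ?_ ?_ ?_
    · have hIcc2 : Icc x₀ x₂ ⊆ Ici (0:ℝ) := fun z hz => le_trans hx₀ hz.1
      exact (hdcont.mono hIcc2).mul
        (Continuous.continuousOn (by continuity : Continuous fun z : ℝ => Real.exp (K * z)))
    · intro y hy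
      rw [interior_Icc] at hy
      have hyIci : y ∈ Ici (0:ℝ) := hIccIci ⟨hy.1.le, hy.2.le.trans hx₂Icc.2⟩
      have hdy : HasDerivWithinAt d (d' y) (interior (Icc x₀ x₂)) y := by
        rw [interior_Icc]
        exact (hd y hyIci).mono (fun z hz => hIccIci ⟨hz.1.le, hz.2.le.trans hx₂Icc.2⟩)
      have hey : HasDerivAt (fun z : ℝ => Real.exp (K * z)) (Real.exp (K * y) * K) y := by
        exact (Real.hasDerivAt_exp (K * y)).comp y (by simpa using (hasDerivAt_id y).const_mul K)
      have := hdy.fun_mul (hey.hasDerivWithinAt)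
      exact this.congr_deriv (by ring)
    · intro y hy
      rw [interior_Icc] at hy
      have hyIci : y ∈ Ici (0:ℝ) := hIccIci ⟨hy.1.le, hy.2.le.trans hx₂Icc.2⟩
      have hdy : 0 < d y := hdpos y ⟨hy.1.le, hy.2⟩
      have := hineq y hyIci hdy.le
      have hexp : 0 < Real.exp (K * y) := Real.exp_pos _
      nlinarith
  have h1 : g x₀ ≤ g x₂ := hmono ⟨le_refl _, hx₂Icc.1⟩ ⟨hx₂Icc.1, le_refl _⟩ hx₂Icc.1
  have h2 : 0 < g x₀ := mul_pos hpos (Real.exp_pos _)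
  have h3 : g x₂ ≤ 0 := mul_nonpos_of_nonpos_of_nonneg hdx₂ (Real.exp_pos _).le
  linarith


/-- `w` is a continuously differentiable solution on `[0,∞)` of
`(σ²/2)·w′(x) + π(w(x)) + h(x) = γ` with `w(0) = w₀`, with derivative `w'`. -/
def IsSolution (σ : ℝ) (U : Set ℝ) (c h : ℝ → ℝ) (w₀ γ : ℝ) (w w' : ℝ → ℝ) : Prop :=
  w 0 = w₀ ∧ ContinuousOn w' (Set.Ici 0) ∧
  (∀ x ∈ Set.Ici (0:ℝ), HasDerivWithinAt w (w' x) (Set.Ici 0) x) ∧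
  (∀ x ∈ Set.Ici (0:ℝ), σ ^ 2 / 2 * w' x + piU U c (w x) + h x = γ)

lemma comparison (σ : ℝ) (hσ : 0 < σ) (U : Set ℝ) (hUne : U.Nonempty) (hUcpt : IsCompact U)
    (c : ℝ → ℝ) (hc : Continuous c) (h : ℝ → ℝ)
    {w₀ v₀ γ γ' : ℝ} {w w' v v' : ℝ → ℝ}
    (hs1 : IsSolution σ U c h w₀ γ w w') (hs2 : IsSolution σ U c h v₀ γ' v v')
    (hγ : γ ≤ γ') (hstrict : w₀ < v₀ ∨ (w₀ = v₀ ∧ γ < γ')) :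
    ∀ x ∈ Ioi (0:ℝ), w x < v x := by
  obtain ⟨M, hM0, hMlip⟩ := piU_lip U hUne hUcpt c hc
  have hσ2 : (0:ℝ) < σ ^ 2 := by positivity
  have hK : 0 ≤ 2 * M / σ ^ 2 := by positivity
  have hd : ∀ x ∈ Ici (0:ℝ), HasDerivWithinAt (fun x => v x - w x) (v' x - w' x) (Ici 0) x :=
    fun x hx => (hs2.2.2.1 x hx).sub (hs1.2.2.1 x hx)
  have hineq : ∀ x ∈ Ici (0:ℝ), 0 ≤ v x - w x →
      -((2 * M / σ ^ 2) * (v x - w x)) ≤ v' x - w' x := by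
    intro x hx hdx
    have e1 := hs1.2.2.2 x hx
    have e2 := hs2.2.2.2 x hx
    have hlip := hMlip (v x) (w x)
    rw [abs_of_nonneg hdx] at hlip
    have key2 : -(2 * M * (v x - w x)) ≤ σ ^ 2 * (v' x - w' x) := by linarith
    calc -((2 * M / σ ^ 2) * (v x - w x)) = -(2 * M * (v x - w x)) / σ ^ 2 := by ring
      _ ≤ (σ ^ 2 * (v' x - w' x)) / σ ^ 2 := by
          exact (div_le_div_iff_of_pos_right hσ2).mpr key2
      _ = v' x - w' x := by field_simp
  intro x hx
  have hx' : (0:ℝ) < x := hx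
  have hgoal : ∀ x₀, 0 ≤ x₀ → x₀ ≤ x → 0 < v x₀ - w x₀ → 0 < v x - w x :=
    fun x₀ h1 h2 h3 => prop_pos hK hd hineq h1 h2 h3
  have : 0 < v x - w x := by
    rcases hstrict with hlt | ⟨heq, hγlt⟩
    · exact hgoal 0 le_rfl hx'.le (by rw [hs1.1, hs2.1]; linarith)
    · have hd0 : v 0 - w 0 = 0 := by rw [hs1.1, hs2.1, heq]; ring
      have hd'0 : 0 < v' 0 - w' 0 := by
        have e1 := hs1.2.2.2 0 self_mem_Ici
        have e2 := hs2.2.2.2 0 self_mem_Ici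
        have hw0 : w 0 = v 0 := by rw [hs1.1, hs2.1, heq]
        rw [hw0] at e1
        by_contra hle
        push_neg at hle
        have h1 : σ ^ 2 / 2 * (v' 0 - w' 0) ≤ 0 :=
          mul_nonpos_of_nonneg_of_nonpos (by positivity) (by linarith)
        nlinarith
      have hslope : Tendsto (slope (fun x => v x - w x) 0) (𝓝[Ioi 0] 0) (𝓝 (v' 0 - w' 0)) := by
        have := hasDerivWithinAt_iff_tendsto_slope.mp (hd 0 self_mem_Ici)
        rwa [Ici_sdiff_left] at this
      have hev : ∀ᶠ y in 𝓝[Ioi 0] (0:ℝ), 0 < slope (fun x => v x - w x) 0 y :=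
        hslope.eventually (lt_mem_nhds hd'0)
      have hmem : Ioo (0:ℝ) x ∈ 𝓝[Ioi 0] (0:ℝ) := Ioo_mem_nhdsGT_of_mem ⟨le_refl 0, hx'⟩
      obtain ⟨y, hy1, hy2⟩ := (hev.and (eventually_of_mem hmem fun y hy => hy)).exists
      have hypos : 0 < y := hy2.1
      have hdy : 0 < v y - w y := by
        rw [slope_def_field, hd0] at hy1
        have h0 : 0 < (v y - w y - 0) / (y - 0) := hy1
        rw [sub_zero, sub_zero] at h0
        calc (0:ℝ) = 0 * y := (zero_mul y).symm
          _ < ((v y - w y) / y) * y := by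
              exact mul_lt_mul_of_pos_right h0 hypos
          _ = v y - w y := by field_simp
      exact hgoal y hypos.le hy2.2.le hdy
  linarith

lemma int_contra {w v : ℝ → ℝ} {ℓ L : ℝ} (hL : 0 < L)
    (hvc : ContinuousOn v (Ici 0))
    (hlt : ∀ x ∈ Ioi (0:ℝ), w x < v x)
    (hw : (∫ x in Ioi (0:ℝ), max (w x - ℓ) 0) = L)
    (hv : (∫ x in Ioi (0:ℝ), max (v x - ℓ) 0) = L) : False := by
  have hfi : IntegrableOn (fun x => max (w x - ℓ) 0) (Ioi 0) := by
    by_contra hni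
    rw [MeasureTheory.integral_undef hni] at hw
    exact hL.ne hw
  have hgi : IntegrableOn (fun x => max (v x - ℓ) 0) (Ioi 0) := by
    by_contra hni
    rw [MeasureTheory.integral_undef hni] at hv
    exact hL.ne hv
  obtain ⟨xb, hxbpos, hxb⟩ : ∃ xb, 0 < xb ∧ ℓ < v xb := by
    by_contra hno
    push_neg at hno
    have : (∫ x in Ioi (0:ℝ), max (v x - ℓ) 0) = 0 := by
      rw [setIntegral_congr_fun measurableSet_Ioi
        (fun x hx => max_eq_right (by linarith [hno x hx]) :
          EqOn (fun x => max (v x - ℓ) 0) (fun _ => (0:ℝ)) (Ioi 0))]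
      simp
    rw [this] at hv; exact hL.ne hv
  have hvx : ContinuousAt v xb := hvc.continuousAt (Ici_mem_nhds hxbpos)
  have hev : ∀ᶠ y in 𝓝 xb, ℓ < v y := hvx.eventually (lt_mem_nhds hxb)
  obtain ⟨ε, hε, hball⟩ := Metric.eventually_nhds_iff.mp hev
  have hIsub : ∀ y ∈ Ioo xb (xb + ε), 0 < y ∧ ℓ < v y := by
    intro y hy
    refine ⟨lt_trans hxbpos hy.1, hball ?_⟩
    rw [Real.dist_eq, abs_of_pos (by linarith [hy.1])]
    linarith [hy.2]
  have hFi : IntegrableOn (fun x => max (v x - ℓ) 0 - max (w x - ℓ) 0) (Ioi 0) := hgi.sub hfi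
  have hae : 0 ≤ᵐ[volume.restrict (Ioi 0)]
      (fun x => max (v x - ℓ) 0 - max (w x - ℓ) 0) := by
    filter_upwards [ae_restrict_mem measurableSet_Ioi] with x hx
    have := hlt x hx
    simp only [Pi.zero_apply, sub_nonneg]
    exact max_le_max (by linarith) le_rfl
  have hsupp : 0 < volume
      (Function.support (fun x => max (v x - ℓ) 0 - max (w x - ℓ) 0) ∩ Ioi 0) := by
    have hIss : Ioo xb (xb + ε) ⊆
        Function.support (fun x => max (v x - ℓ) 0 - max (w x - ℓ) 0) ∩ Ioi 0 := by
      intro y hy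
      obtain ⟨hy0, hyv⟩ := hIsub y hy
      refine ⟨?_, hy0⟩
      have hgy : max (v y - ℓ) 0 = v y - ℓ := max_eq_left (by linarith)
      have hfy : max (w y - ℓ) 0 < max (v y - ℓ) 0 := by
        rw [hgy]
        exact max_lt (by linarith [hlt y hy0]) (by linarith)
      simp only [Function.mem_support]
      intro hzero
      rw [sub_eq_zero] at hzero
      exact hfy.ne' hzero
    calc (0:ENNReal) < ENNReal.ofReal ε := ENNReal.ofReal_pos.mpr hε
      _ = volume (Ioo xb (xb + ε)) := by rw [Real.volume_Ioo]; ring_nf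
      _ ≤ _ := measure_mono hIss
  have hpos : 0 < ∫ x in Ioi (0:ℝ), (max (v x - ℓ) 0 - max (w x - ℓ) 0) :=
    (setIntegral_pos_iff_support_of_nonneg_ae hae hFi).mpr hsupp
  have : (∫ x in Ioi (0:ℝ), (max (v x - ℓ) 0 - max (w x - ℓ) 0)) = 0 := by
    rw [integral_sub hgi hfi, hv, hw]; ring
  linarith

theorem stmt_14 (σ : ℝ) (hσ : 0 < σ) (U : Set ℝ) (hUne : U.Nonempty) (hUcpt : IsCompact U)
    (c : ℝ → ℝ) (hc : Continuous c) (h : ℝ → ℝ)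
    (hhcont : ContinuousOn h (Set.Ici 0)) (hhmono : StrictMonoOn h (Set.Ici 0))
    (hh0 : h 0 = 0) (hhtop : Filter.Tendsto h Filter.atTop Filter.atTop)
    (ℓ L : ℝ) (hℓ : 0 < ℓ) (hL : 0 < L) :
    (∀ w₀ γ γ' : ℝ, ∀ w w' v v' : ℝ → ℝ, w₀ < ℓ →
      IsSolution σ U c h w₀ γ w w' → IsSolution σ U c h w₀ γ' v v' →
      (∫ x in Set.Ioi (0:ℝ), max (w x - ℓ) 0) = L →
      (∫ x in Set.Ioi (0:ℝ), max (v x - ℓ) 0) = L → γ = γ') ∧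
    (∀ w₀₁ w₀₂ γ₁ γ₂ : ℝ, ∀ w₁ w₁' w₂ w₂' : ℝ → ℝ, w₀₁ < w₀₂ → w₀₂ < ℓ →
      IsSolution σ U c h w₀₁ γ₁ w₁ w₁' → IsSolution σ U c h w₀₂ γ₂ w₂ w₂' →
      (∫ x in Set.Ioi (0:ℝ), max (w₁ x - ℓ) 0) = L →
      (∫ x in Set.Ioi (0:ℝ), max (w₂ x - ℓ) 0) = L → γ₂ < γ₁) := by
  constructor
  · intro w₀ γ γ' w w' v v' hw₀ hs1 hs2 hIw hIv
    by_contra hne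
    rcases Ne.lt_or_gt hne with hlt | hlt
    · have hcomp := comparison σ hσ U hUne hUcpt c hc h hs1 hs2 hlt.le (Or.inr ⟨rfl, hlt⟩)
      exact int_contra hL (fun y hy => (hs2.2.2.1 y hy).continuousWithinAt) hcomp hIw hIv
    · have hcomp := comparison σ hσ U hUne hUcpt c hc h hs2 hs1 hlt.le (Or.inr ⟨rfl, hlt⟩)
      exact int_contra hL (fun y hy => (hs1.2.2.1 y hy).continuousWithinAt) hcomp hIv hIw
  · intro w₀₁ w₀₂ γ₁ γ₂ w₁ w₁' w₂ w₂' h12 hw₀₂ hs1 hs2 hI1 hI2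
    by_contra hcon
    push_neg at hcon
    have hcomp := comparison σ hσ U hUne hUcpt c hc h hs1 hs2 hcon (Or.inl h12)
    exact int_contra hL (fun y hy => (hs2.2.2.1 y hy).continuousWithinAt) hcomp hI1 hI2
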